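/- arXiv:2102.02597 — 3 statements merged into one kernel-verified Lean document; each statement's English description precedes it below -/
import Mathlib

section
/- Let k be a positive integer, γ, δ ∈ [0,1] with γk, δk, γk/2, and (δ−γ/2)k integers. Let x, y ∈ F₂^k with wt(x+y) = γk. If z is drawn uniformly from F₂^k, then Pr[wt(x+z) = δk and wt(y+z) = δk] = (γk choose γk/2) · ((1−γ)k choose (δ−γ/2)k) · 2^(-k). -/
open Finset

private lemma zmod2_add_ne_zero (a b : ZMod 2) : a + b ≠ 0 ↔ b ≠ a := by
  revert a b; decide

private lemma zmod2_add_one_ne (a : ZMod 2) : a + 1 ≠ a := by revert a; decide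

private lemma zmod2_eq_add_one {a b : ZMod 2} (h : b ≠ a) : b = a + 1 := by
  revert a b; decide

private lemma zmod2_ne_iff (a b c : ZMod 2) (h : b ≠ c) : (a ≠ c ↔ a = b) := by
  revert a b c; decide

theorem stmt_1 (k : ℕ) (hk : 0 < k) (γ δ : ℝ) (hγ0 : 0 ≤ γ) (hγ1 : γ ≤ 1)
    (hδ0 : 0 ≤ δ) (hδ1 : δ ≤ 1)
    (g m gh s : ℕ) (hg : (g : ℝ) = γ * k) (hm : (m : ℝ) = δ * k)
    (hgh : (gh : ℝ) = γ * k / 2) (hs : (s : ℝ) = (δ - γ / 2) * k)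
    (x y : Fin k → ZMod 2) (hxy : hammingNorm (x + y) = g) :
    ((Finset.univ.filter (fun z : Fin k → ZMod 2 =>
        hammingNorm (x + z) = m ∧ hammingNorm (y + z) = m)).card : ℝ) /
      (Fintype.card (Fin k → ZMod 2)) =
    (g.choose gh : ℝ) * ((k - g).choose s : ℝ) * (1 / 2) ^ k := by
  -- nat arithmetic facts
  have hg2 : g = 2 * gh := by
    have : (g : ℝ) = 2 * gh := by rw [hg, hgh]; ring
    exact_mod_cast this
  have hms : m = gh + s := by
    have : (m : ℝ) = gh + s := by rw [hm, hgh, hs]; ring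
    exact_mod_cast this
  set E : Finset (Fin k) := univ.filter (fun i => x i ≠ y i) with hE
  have hEcard : E.card = g := by
    rw [← hxy]
    unfold hammingNorm
    congr 1
    apply filter_congr
    intro i _
    simp only [Pi.add_apply, zmod2_add_ne_zero, ne_comm]
  have hEc : Eᶜ.card = k - g := by
    rw [card_compl, hEcard]; simp
  -- rewrite the norms
  have hnorm : ∀ z : Fin k → ZMod 2, ∀ w : Fin k → ZMod 2,
      hammingNorm (w + z) = (univ.filter (fun i => z i ≠ w i)).card := by
    intro z w
    unfold hammingNorm
    congr 1
    apply filter_congr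
    intro i _
    simp only [Pi.add_apply, zmod2_add_ne_zero]
  -- master equivalence
  have master : ∀ z : Fin k → ZMod 2,
      (hammingNorm (x + z) = m ∧ hammingNorm (y + z) = m) ↔
      ((E.filter (fun i => z i ≠ x i)).card = gh ∧
        (Eᶜ.filter (fun i => z i ≠ x i)).card = s) := by
    intro z
    rw [hnorm z x, hnorm z y]
    have split : ∀ p : Fin k → Prop, ∀ _ : DecidablePred p,
        (univ.filter p).card = (E.filter p).card + (Eᶜ.filter p).card := by
      intro p _
      rw [← union_compl E, filter_union, card_union_of_disjoint]
      exact disjoint_filter_filter disjoint_compl_right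
    rw [split _ _, split (fun i => z i ≠ y i) _]
    have e1 : E.filter (fun i => z i ≠ y i) = E.filter (fun i => ¬ z i ≠ x i) := by
      apply filter_congr
      intro i hi
      simp only [hE, mem_filter] at hi
      rw [zmod2_ne_iff (z i) (x i) (y i) hi.2, not_not]
    have e2 : Eᶜ.filter (fun i => z i ≠ y i) = Eᶜ.filter (fun i => z i ≠ x i) := by
      apply filter_congr
      intro i hi
      simp only [hE, mem_compl, mem_filter, mem_univ, true_and, not_not] at hi
      rw [hi]
    rw [e1, e2]
    have hsum : (E.filter (fun i => z i ≠ x i)).card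
        + (E.filter (fun i => ¬ z i ≠ x i)).card = g := by
      rw [card_filter_add_card_filter_not, hEcard]
    omega
  -- the shape of vectors corresponding to pairs
  have jshape : ∀ p : Finset (Fin k) × Finset (Fin k), p.1 ⊆ E → p.2 ⊆ Eᶜ →
      (E.filter (fun i => (if i ∈ p.1 ∪ p.2 then x i + 1 else x i) ≠ x i) = p.1 ∧
       Eᶜ.filter (fun i => (if i ∈ p.1 ∪ p.2 then x i + 1 else x i) ≠ x i) = p.2) := by
    intro p h1 h2
    have hne : ∀ i, ((if i ∈ p.1 ∪ p.2 then x i + 1 else x i) ≠ x i) ↔ i ∈ p.1 ∪ p.2 := by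
      intro i
      by_cases h : i ∈ p.1 ∪ p.2 <;> simp [h, zmod2_add_one_ne]
    constructor
    · rw [filter_congr (fun i _ => hne i)]
      ext i
      simp only [mem_filter, mem_union]
      constructor
      · rintro ⟨hiE, hi1 | hi2⟩
        · exact hi1
        · exact absurd hiE (mem_compl.mp (h2 hi2))
      · intro hi; exact ⟨h1 hi, Or.inl hi⟩
    · rw [filter_congr (fun i _ => hne i)]
      ext i
      simp only [mem_filter, mem_union]
      constructor
      · rintro ⟨hiE, hi1 | hi2⟩
        · exact absurd (h1 hi1) (mem_compl.mp hiE)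
        · exact hi2
      · intro hi; exact ⟨h2 hi, Or.inr hi⟩
  have key : (Finset.univ.filter (fun z : Fin k → ZMod 2 =>
        hammingNorm (x + z) = m ∧ hammingNorm (y + z) = m)).card
      = g.choose gh * (k - g).choose s := by
    rw [← hEc, ← hEcard, ← card_powersetCard, ← card_powersetCard, ← card_product]
    apply Finset.card_bij'
      (i := fun z _ => (E.filter (fun i => z i ≠ x i), Eᶜ.filter (fun i => z i ≠ x i)))
      (j := fun p _ => (fun i => if i ∈ p.1 ∪ p.2 then x i + 1 else x i))
    · -- maps into target
      intro z hz
      simp only [mem_filter, mem_univ, true_and] at hz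
      obtain ⟨hA, hB⟩ := (master z).mp hz
      simp only [mem_product, mem_powersetCard]
      exact ⟨⟨filter_subset _ _, hA⟩, ⟨filter_subset _ _, hB⟩⟩
    · -- maps back into source
      intro p hp
      simp only [mem_product, mem_powersetCard] at hp
      obtain ⟨⟨hp1, hc1⟩, ⟨hp2, hc2⟩⟩ := hp
      obtain ⟨e1, e2⟩ := jshape p hp1 hp2
      simp only [mem_filter, mem_univ, true_and]
      exact (master _).mpr ⟨by rw [e1, hc1], by rw [e2, hc2]⟩
    · -- left inverse
      intro z hz
      funext i
      by_cases h : z i ≠ x i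
      · have : i ∈ E.filter (fun i => z i ≠ x i) ∪ Eᶜ.filter (fun i => z i ≠ x i) := by
          simp only [mem_union, mem_filter, mem_compl]
          by_cases hiE : i ∈ E
          · exact Or.inl ⟨hiE, h⟩
          · exact Or.inr ⟨by simpa using hiE, h⟩
        simp only [this, if_pos]
        exact (zmod2_eq_add_one h).symm
      · have : i ∉ E.filter (fun i => z i ≠ x i) ∪ Eᶜ.filter (fun i => z i ≠ x i) := by
          simp only [mem_union, mem_filter, mem_compl, not_or, not_and]
          exact ⟨fun _ => h, fun _ => h⟩
        simp only [this, if_neg, not_false_iff]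
        push_neg at h
        exact h.symm
    · -- right inverse
      intro p hp
      simp only [mem_product, mem_powersetCard] at hp
      obtain ⟨⟨hp1, _⟩, ⟨hp2, _⟩⟩ := hp
      obtain ⟨e1, e2⟩ := jshape p hp1 hp2
      exact Prod.ext e1 e2
  rw [key]
  have hcard : (Fintype.card (Fin k → ZMod 2) : ℝ) = 2 ^ k := by
    simp [Fintype.card_fun]
  rw [hcard]
  push_cast
  rw [div_eq_iff (by positivity), mul_assoc, ← mul_pow]
  norm_num
end

section
/- Let H(x) = −x log₂ x − (1−x) log₂(1−x) for x ∈ (0,1), with H(0)=H(1)=0. For γ ∈ (0, 1/2), the function ϑ*(δ) = 2(λ + H(δ) − 1) + (1−γ)(1 − H((δ − γ/2)/(1−γ))), defined for δ ∈ (γ/2, 1/2), attains its global minimum at δ_min = (1 − √(1−2γ))/2, with minimum value ϑ*(δ_min) = 2λ + H(γ) − 1. -/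
/-- Binary entropy function (base-2 logarithm), with `H 0 = H 1 = 0`. -/
noncomputable def binH (x : ℝ) : ℝ := -x * Real.logb 2 x - (1 - x) * Real.logb 2 (1 - x)

lemma hasDerivAt_binH {x : ℝ} (h0 : 0 < x) (h1 : x < 1) :
    HasDerivAt binH ((Real.log (1 - x) - Real.log x) / Real.log 2) x := by
  have h1' : (0:ℝ) < 1 - x := by linarith
  have hA : HasDerivAt (fun y : ℝ => y * Real.log y) (Real.log x + 1) x :=
    Real.hasDerivAt_mul_log h0.ne'
  have hB : HasDerivAt (fun y : ℝ => (1 - y) * Real.log (1 - y))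
      ((Real.log (1 - x) + 1) * (-1)) x :=
    (Real.hasDerivAt_mul_log h1'.ne').comp x ((hasDerivAt_id' x).const_sub 1)
  have h : HasDerivAt (fun y : ℝ => (-(y * Real.log y) - (1 - y) * Real.log (1 - y)) / Real.log 2)
      ((-(Real.log x + 1) - (Real.log (1 - x) + 1) * (-1)) / Real.log 2) x :=
    (hA.neg.sub hB).div_const _
  have hfe : (fun y : ℝ => (-(y * Real.log y) - (1 - y) * Real.log (1 - y)) / Real.log 2) = binH := by
    funext y
    simp only [binH, Real.logb, Real.log_div]
    ring
  rw [hfe] at h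
  convert h using 1
  ring

lemma hasDerivAt_F {γ lam δ : ℝ} (hγ0 : 0 < γ) (hγ1 : γ < 1 / 2)
    (hδ0 : γ / 2 < δ) (hδ1 : δ < 1 / 2) :
    HasDerivAt (fun x => 2 * (lam + binH x - 1) + (1 - γ) * (1 - binH ((x - γ / 2) / (1 - γ))))
      ((2 * (Real.log (1 - δ) - Real.log δ)
        - (Real.log (1 - δ - γ / 2) - Real.log (δ - γ / 2))) / Real.log 2) δ := by
  have hg : (0:ℝ) < 1 - γ := by linarith
  have hδp : 0 < δ := by linarith
  have hδq : δ < 1 := by linarith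
  set ε := (δ - γ / 2) / (1 - γ) with hε
  have hε0 : 0 < ε := div_pos (by linarith) hg
  have hε1 : ε < 1 := by
    rw [hε, div_lt_one hg]; linarith
  have hinner : HasDerivAt (fun x : ℝ => (x - γ / 2) / (1 - γ)) (1 / (1 - γ)) δ := by
    simpa using (((hasDerivAt_id δ).sub_const (γ/2)).div_const (1 - γ))
  have hcomp : HasDerivAt (fun x : ℝ => binH ((x - γ / 2) / (1 - γ)))
      (((Real.log (1 - ε) - Real.log ε) / Real.log 2) * (1 / (1 - γ))) δ := by
    have h2 := hasDerivAt_binH hε0 hε1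
    rw [hε] at h2
    exact h2.comp δ hinner
  have hF : HasDerivAt (fun x => 2 * (lam + binH x - 1) + (1 - γ) * (1 - binH ((x - γ / 2) / (1 - γ))))
      (2 * (0 + (Real.log (1 - δ) - Real.log δ) / Real.log 2)
        + (1 - γ) * (0 - ((Real.log (1 - ε) - Real.log ε) / Real.log 2) * (1 / (1 - γ)))) δ := by
    exact ((((hasDerivAt_const δ lam).add (hasDerivAt_binH hδp hδq)).sub_const 1).const_mul 2).add
      ((((hasDerivAt_const δ (1:ℝ)).sub hcomp)).const_mul (1 - γ))
  convert hF using 1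
  have h1ε : Real.log (1 - ε) = Real.log (1 - δ - γ / 2) - Real.log (1 - γ) := by
    have : 1 - ε = (1 - δ - γ / 2) / (1 - γ) := by
      rw [hε]; field_simp; ring
    rw [this, Real.log_div (by linarith) hg.ne']
  have hεe : Real.log ε = Real.log (δ - γ / 2) - Real.log (1 - γ) := by
    rw [hε, Real.log_div (by linarith) hg.ne']
  rw [h1ε, hεe]
  have hlog1γ : (1:ℝ) - γ ≠ 0 := hg.ne'
  field_simp
  ring

lemma numer_neg {γ s x : ℝ} (hγ0 : 0 < γ) (hs2 : s^2 = 1 - 2*γ)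
    (hs0 : 0 < s) (hx0 : γ/2 < x) (hx1 : 2*x < 1 - s) :
    2*(Real.log (1-x) - Real.log x)
      - (Real.log (1-x-γ/2) - Real.log (x-γ/2)) < 0 := by
  have hx2 : x < 1/2 := by nlinarith
  have hxp : 0 < x := by linarith
  have h1x : (0:ℝ) < 1 - x := by linarith
  have hxg : (0:ℝ) < x - γ/2 := by linarith
  have h1xg : (0:ℝ) < 1 - x - γ/2 := by linarith
  have h1 : (0:ℝ) < 1 - 2*x - s := by linarith
  have h2 : (0:ℝ) < 1 - 2*x + s := by linarith
  have halg : (1-x)*(1-x)*(x-γ/2) < x*x*(1-x-γ/2) := by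
    nlinarith [mul_pos (mul_pos h1 h2) (show (0:ℝ) < 1 - 2*x by linarith)]
  have hlog := Real.log_lt_log (by positivity) halg
  rw [Real.log_mul (by positivity) hxg.ne', Real.log_mul h1x.ne' h1x.ne',
    Real.log_mul (by positivity) h1xg.ne', Real.log_mul hxp.ne' hxp.ne'] at hlog
  linarith

lemma numer_pos {γ s x : ℝ} (hγ0 : 0 < γ) (hγ1 : γ < 1/2) (hs2 : s^2 = 1 - 2*γ)
    (hs0 : 0 < s) (hx1 : 1 - s < 2*x) (hx2 : x < 1/2) :
    0 < 2*(Real.log (1-x) - Real.log x)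
      - (Real.log (1-x-γ/2) - Real.log (x-γ/2)) := by
  have hs1 : s < 1 := by nlinarith
  have hxp : 0 < x := by linarith
  have h1x : (0:ℝ) < 1 - x := by linarith
  have hx0 : γ/2 < x := by nlinarith
  have hxg : (0:ℝ) < x - γ/2 := by linarith
  have h1xg : (0:ℝ) < 1 - x - γ/2 := by linarith
  have h1 : (0:ℝ) < 2*x - 1 + s := by linarith
  have h2 : (0:ℝ) < 1 - 2*x + s := by linarith
  have halg : x*x*(1-x-γ/2) < (1-x)*(1-x)*(x-γ/2) := by
    nlinarith [mul_pos (mul_pos h1 h2) (show (0:ℝ) < 1 - 2*x by linarith)]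
  have hlog := Real.log_lt_log (by positivity) halg
  rw [Real.log_mul (by positivity) hxg.ne', Real.log_mul h1x.ne' h1x.ne',
    Real.log_mul (by positivity) h1xg.ne', Real.log_mul hxp.ne' hxp.ne'] at hlog
  linarith

lemma value_eq {γ lam : ℝ} (hγ0 : 0 < γ) (hγ1 : γ < 1/2) :
    2 * (lam + binH ((1 - Real.sqrt (1 - 2 * γ)) / 2) - 1) +
        (1 - γ) * (1 - binH (((1 - Real.sqrt (1 - 2 * γ)) / 2 - γ / 2) / (1 - γ))) =
      2 * lam + binH γ - 1 := by
  set s := Real.sqrt (1 - 2 * γ) with hs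
  have hs2 : s^2 = 1 - 2*γ := Real.sq_sqrt (by linarith)
  have hs0 : 0 < s := Real.sqrt_pos.mpr (by linarith)
  have hs1 : s < 1 := by nlinarith
  have hγs : γ = (1 - s^2)/2 := by linarith
  have h1s : (0:ℝ) < 1 - s := by linarith
  have h1s' : (0:ℝ) < 1 + s := by linarith
  have h2 : (0:ℝ) < 1 + s^2 := by positivity
  rw [hγs]
  have he : ((1 - s)/2 - (1 - s^2)/2/2)/(1-(1 - s^2)/2) = ((1-s)*(1-s))/(2*(1+s^2)) := by
    rw [div_eq_div_iff (by nlinarith) (by positivity)]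
    ring
  rw [he]
  set L1 := Real.logb 2 (1-s) with hL1
  set L2 := Real.logb 2 (1+s) with hL2
  set L3 := Real.logb 2 (1+s^2) with hL3
  have eδ : binH ((1-s)/2) = 1 - (1-s)/2 * L1 - (1+s)/2 * L2 := by
    rw [binH, show (1:ℝ) - (1-s)/2 = (1+s)/2 by ring,
      Real.logb_div h1s.ne' two_ne_zero, Real.logb_div h1s'.ne' two_ne_zero,
      Real.logb_self_eq_one one_lt_two]
    ring
  have eε : binH (((1-s)*(1-s))/(2*(1+s^2)))
      = 1 + L3 - ((1-s)*(1-s))/(1+s^2) * L1 - ((1+s)*(1+s))/(1+s^2) * L2 := by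
    rw [binH, show (1:ℝ) - ((1-s)*(1-s))/(2*(1+s^2)) = ((1+s)*(1+s))/(2*(1+s^2)) by
        field_simp; ring,
      Real.logb_div (by positivity) (by positivity),
      Real.logb_div (by positivity) (by positivity),
      Real.logb_mul h1s.ne' h1s.ne', Real.logb_mul h1s'.ne' h1s'.ne',
      Real.logb_mul two_ne_zero h2.ne', Real.logb_self_eq_one one_lt_two]
    field_simp
    ring
  have eγ : binH ((1 - s^2)/2) = 1 - (1-s^2)/2*(L1+L2) - (1+s^2)/2*L3 := by
    rw [binH, show (1:ℝ) - (1-s^2)/2 = (1+s^2)/2 by ring,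
      show (1:ℝ) - s^2 = (1-s)*(1+s) by ring,
      Real.logb_div (by positivity) two_ne_zero,
      Real.logb_div h2.ne' two_ne_zero,
      Real.logb_mul h1s.ne' h1s'.ne', Real.logb_self_eq_one one_lt_two]
    ring
  rw [eδ, eε, eγ]
  field_simp
  ring

theorem stmt_12 (γ lam : ℝ) (hγ0 : 0 < γ) (hγ1 : γ < 1 / 2) (hl0 : 0 ≤ lam) (hl1 : lam ≤ 1) :
    (1 - Real.sqrt (1 - 2 * γ)) / 2 ∈ Set.Ioo (γ / 2) (1 / 2) ∧
    (∀ δ ∈ Set.Ioo (γ / 2) (1 / 2 : ℝ),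
      2 * (lam + binH ((1 - Real.sqrt (1 - 2 * γ)) / 2) - 1) +
        (1 - γ) * (1 - binH (((1 - Real.sqrt (1 - 2 * γ)) / 2 - γ / 2) / (1 - γ))) ≤
      2 * (lam + binH δ - 1) + (1 - γ) * (1 - binH ((δ - γ / 2) / (1 - γ)))) ∧
    2 * (lam + binH ((1 - Real.sqrt (1 - 2 * γ)) / 2) - 1) +
        (1 - γ) * (1 - binH (((1 - Real.sqrt (1 - 2 * γ)) / 2 - γ / 2) / (1 - γ))) =
      2 * lam + binH γ - 1 := by
  set s := Real.sqrt (1 - 2 * γ) with hs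
  have hs2 : s^2 = 1 - 2*γ := Real.sq_sqrt (by linarith)
  have hs0 : 0 < s := Real.sqrt_pos.mpr (by linarith)
  have hs1 : s < 1 := by nlinarith
  set δm := (1 - s) / 2 with hδm
  have hmem : δm ∈ Set.Ioo (γ / 2) (1 / 2 : ℝ) := by
    constructor
    · have : (0:ℝ) < (1-s)^2 := pow_pos (by linarith) 2
      rw [hδm]; nlinarith
    · rw [hδm]; linarith
  set F : ℝ → ℝ := fun x => 2 * (lam + binH x - 1) + (1 - γ) * (1 - binH ((x - γ / 2) / (1 - γ)))
    with hF
  have hδm1 : δm < 1/2 := hmem.2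
  have hδm0 : γ/2 < δm := hmem.1
  have hderiv : ∀ x ∈ Set.Ioo (γ/2) (1/2 : ℝ),
      HasDerivAt F ((2 * (Real.log (1 - x) - Real.log x)
        - (Real.log (1 - x - γ / 2) - Real.log (x - γ / 2))) / Real.log 2) x :=
    fun x hx => hasDerivAt_F hγ0 hγ1 hx.1 hx.2
  have hanti : StrictAntiOn F (Set.Ioc (γ/2) δm) := by
    apply strictAntiOn_of_deriv_neg (convex_Ioc _ _)
    · intro x hx
      exact (hderiv x ⟨hx.1, lt_of_le_of_lt hx.2 hδm1⟩).continuousAt.continuousWithinAt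
    · intro x hx
      rw [interior_Ioc] at hx
      rw [(hderiv x ⟨hx.1, hx.2.trans hδm1⟩).deriv]
      apply div_neg_of_neg_of_pos
      · exact numer_neg hγ0 hs2 hs0 hx.1 (by have := hx.2; rw [hδm] at this; linarith)
      · exact Real.log_pos one_lt_two
  have hmono : StrictMonoOn F (Set.Ico δm (1/2 : ℝ)) := by
    apply strictMonoOn_of_deriv_pos (convex_Ico _ _)
    · intro x hx
      exact (hderiv x ⟨lt_of_lt_of_le hδm0 hx.1, hx.2⟩).continuousAt.continuousWithinAt
    · intro x hx
      rw [interior_Ico] at hx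
      rw [(hderiv x ⟨hδm0.trans hx.1, hx.2⟩).deriv]
      apply div_pos
      · exact numer_pos hγ0 hγ1 hs2 hs0 (by have := hx.1; rw [hδm] at this; linarith) hx.2
      · exact Real.log_pos one_lt_two
  refine ⟨hmem, ?_, value_eq hγ0 hγ1⟩
  intro δ hδ
  show F δm ≤ F δ
  rcases lt_trichotomy δ δm with h | h | h
  · exact le_of_lt (hanti ⟨hδ.1, h.le⟩ ⟨hδm0, le_refl _⟩ h)
  · rw [h]
  · exact le_of_lt (hmono ⟨le_refl _, hδm1⟩ ⟨h.le, hδ.2⟩ h)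
end

section
/- Define for γ ∈ [0, 1/2) and λ ∈ (0,1) the exponent ϑ(λ) = (1−γ)(1 − H((H⁻¹(1−λ) − γ/2)/(1−γ))) where H is binary entropy and H⁻¹ its left-branch inverse. Then lim_{λ→0⁺} ϑ(λ)/λ = 1/(1−γ). -/
open Filter

lemma binH_eq (x : ℝ) : binH x = Real.binEntropy x / Real.log 2 := by
  unfold binH Real.binEntropy Real.logb
  rw [Real.log_inv, Real.log_inv]
  ring

lemma log2_pos : (0:ℝ) < Real.log 2 := Real.log_pos one_lt_two

lemma binH_half : binH (1/2) = 1 := by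
  rw [binH_eq, show (1/2:ℝ) = 2⁻¹ by norm_num, Real.binEntropy_two_inv]
  exact div_self log2_pos.ne'

lemma binH_continuous : Continuous binH := by
  have : binH = fun x => Real.binEntropy x / Real.log 2 := funext binH_eq
  rw [this]
  exact Real.binEntropy_continuous.div_const _

lemma binH_hasDerivAt {t : ℝ} (h0 : t ≠ 0) (h1 : t ≠ 1) :
    HasDerivAt binH ((Real.log (1 - t) - Real.log t) / Real.log 2) t := by
  have : binH = fun x => Real.binEntropy x / Real.log 2 := funext binH_eq
  rw [this]
  exact (Real.hasDerivAt_binEntropy h0 h1).div_const _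

lemma key (γ : ℝ) (hγ0 : 0 ≤ γ) (hγ1 : γ < 1 / 2) :
    Tendsto (fun t : ℝ => ((1 - γ) * (1 - binH ((t - γ / 2) / (1 - γ)))) / (1 - binH t))
      (nhdsWithin (1/2) (Set.Iio (1/2))) (nhds (1 / (1 - γ))) := by
  have hc : (0:ℝ) < 1 - γ := by linarith
  set c : ℝ := 1 - γ with hcdef
  set u : ℝ → ℝ := fun t => (t - γ / 2) / c with hudef
  have huhalf : u (1/2) = 1/2 := by
    rw [hudef]
    field_simp
    ring
  have hucont : Continuous u := by
    rw [hudef]; exact (continuous_id.sub continuous_const).div_const _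
  have hbounds : ∀ t ∈ Set.Ioo (1/4:ℝ) (1/2), 0 < t ∧ t < 1 ∧ 0 < u t ∧ u t < 1/2 := by
    intro t ht
    obtain ⟨ht1, ht2⟩ := ht
    rw [hudef]
    refine ⟨by linarith, by linarith, ?_, ?_⟩
    · apply div_pos _ hc; linarith
    · rw [div_lt_iff₀ hc, hcdef]; linarith
  have hder_u : ∀ t : ℝ, HasDerivAt u (1/c) t := by
    intro t
    rw [hudef]
    have := ((hasDerivAt_id t).sub_const (γ/2)).div_const c
    simpa [one_div] using this
  suffices main : Tendsto (fun t : ℝ => (c * (1 - binH (u t))) / (1 - binH t))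
      (nhdsWithin (1/2) (Set.Iio (1/2))) (nhds (1/c)) by exact main
  clear_value u
  clear hudef
  have hutend : Tendsto u (nhdsWithin (1/2) (Set.Iio (1/2))) (nhds (1/2)) := by
    have h := (hucont.tendsto (1/2)).mono_left
      (nhdsWithin_le_nhds (a := (1/2:ℝ)) (s := Set.Iio (1/2)))
    rwa [huhalf] at h
  have hev : ∀ᶠ t in nhdsWithin (1/2:ℝ) (Set.Iio (1/2)), t ∈ Set.Ioo (1/4:ℝ) (1/2) :=
    Ioo_mem_nhdsLT_of_mem (by norm_num)
  -- abbreviations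
  set p : ℝ → ℝ := fun t => (Real.log (u t) - Real.log (1 - u t)) / Real.log 2 with hpdef
  set q : ℝ → ℝ := fun t => (Real.log t - Real.log (1 - t)) / Real.log 2 with hqdef
  set p' : ℝ → ℝ := fun t => ((u t)⁻¹ + (1 - u t)⁻¹) / c / Real.log 2 with hp'def
  set q' : ℝ → ℝ := fun t => (t⁻¹ + (1 - t)⁻¹) / Real.log 2 with hq'def
  clear_value p q p' q'
  -- second L'Hopital input: p'/q' → 1/c
  have hdiv2 : Tendsto (fun t => p' t / q' t) (nhdsWithin (1/2:ℝ) (Set.Iio (1/2))) (nhds (1/c)) := by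
    have ci : ContinuousAt (fun x : ℝ => x⁻¹) (1/2) := continuousAt_inv₀ (by norm_num)
    have ci2 : ContinuousAt (fun x : ℝ => (1 - x)⁻¹) (1/2) := by
      have : ContinuousAt (fun x : ℝ => 1 - x) (1/2) := by fun_prop
      exact ContinuousAt.inv₀ this (by norm_num)
    have h1 : Tendsto (fun t => (u t)⁻¹) (nhdsWithin (1/2:ℝ) (Set.Iio (1/2))) (nhds 2) := by
      have := ci.tendsto.comp hutend
      norm_num at this
      exact this
    have h2 : Tendsto (fun t => (1 - u t)⁻¹) (nhdsWithin (1/2:ℝ) (Set.Iio (1/2))) (nhds 2) := by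
      have := ci2.tendsto.comp hutend
      norm_num at this
      exact this
    have h3 : Tendsto (fun t : ℝ => t⁻¹) (nhdsWithin (1/2:ℝ) (Set.Iio (1/2))) (nhds 2) := by
      have := ci.tendsto.mono_left (nhdsWithin_le_nhds (a := (1/2:ℝ)) (s := Set.Iio (1/2)))
      norm_num at this
      exact this
    have h4 : Tendsto (fun t : ℝ => (1 - t)⁻¹) (nhdsWithin (1/2:ℝ) (Set.Iio (1/2))) (nhds 2) := by
      have := ci2.tendsto.mono_left (nhdsWithin_le_nhds (a := (1/2:ℝ)) (s := Set.Iio (1/2)))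
      norm_num at this
      exact this
    have hnum : Tendsto p' (nhdsWithin (1/2:ℝ) (Set.Iio (1/2))) (nhds ((2 + 2)/c/Real.log 2)) := by
      rw [hp'def]; exact ((h1.add h2).div_const c).div_const _
    have hden : Tendsto q' (nhdsWithin (1/2:ℝ) (Set.Iio (1/2))) (nhds ((2 + 2)/Real.log 2)) := by
      rw [hq'def]; exact (h3.add h4).div_const _
    have := hnum.div hden (by positivity)
    convert this using 2
    · rfl
    · rw [div_div_div_cancel_right₀ log2_pos.ne']
      ring
  have hp_deriv : ∀ᶠ t in nhdsWithin (1/2:ℝ) (Set.Iio (1/2)), HasDerivAt p (p' t) t := by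
    filter_upwards [hev] with t ht
    obtain ⟨h0, h1, hu0, hu2⟩ := hbounds t ht
    have d1 : HasDerivAt (fun t => Real.log (u t)) ((u t)⁻¹ * (1/c)) t :=
      (Real.hasDerivAt_log hu0.ne').comp t (hder_u t)
    have inner : HasDerivAt (fun t => 1 - u t) (-(1/c)) t := (hder_u t).const_sub 1
    have d2 : HasDerivAt (fun t => Real.log (1 - u t)) ((1 - u t)⁻¹ * -(1/c)) t :=
      by have := (Real.hasDerivAt_log (by linarith : (1:ℝ) - u t ≠ 0)).comp t inner; exact this
    have hd := (d1.sub d2).div_const (Real.log 2)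
    rw [hpdef, hp'def]
    refine hd.congr_deriv ?_
    ring
  have hq_deriv : ∀ᶠ t in nhdsWithin (1/2:ℝ) (Set.Iio (1/2)), HasDerivAt q (q' t) t := by
    filter_upwards [hev] with t ht
    obtain ⟨h0, h1, hu0, hu2⟩ := hbounds t ht
    have d1 : HasDerivAt (fun t : ℝ => Real.log t) t⁻¹ t := Real.hasDerivAt_log h0.ne'
    have inner : HasDerivAt (fun t : ℝ => 1 - t) (-1) t := (hasDerivAt_id t).const_sub 1
    have d2 : HasDerivAt (fun t : ℝ => Real.log (1 - t)) ((1 - t)⁻¹ * -1) t :=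
      (Real.hasDerivAt_log (by linarith : (1:ℝ) - t ≠ 0)).comp t inner
    have hd := (d1.sub d2).div_const (Real.log 2)
    rw [hqdef, hq'def]
    refine hd.congr_deriv ?_
    ring
  have hq'ne : ∀ᶠ t in nhdsWithin (1/2:ℝ) (Set.Iio (1/2)), q' t ≠ 0 := by
    filter_upwards [hev] with t ht
    obtain ⟨h0, h1, _, _⟩ := hbounds t ht
    have hpos : (0:ℝ) < (t⁻¹ + (1 - t)⁻¹) / Real.log 2 :=
      div_pos (add_pos (inv_pos.2 h0) (inv_pos.2 (by linarith))) log2_pos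
    rw [hq'def]
    exact hpos.ne'
  have logtend : Tendsto (fun t : ℝ => Real.log t) (nhds (1/2:ℝ)) (nhds (Real.log (1/2))) :=
    (Real.continuousAt_log (by norm_num)).tendsto
  have logtend2 : Tendsto (fun t : ℝ => Real.log (1 - t)) (nhds (1/2:ℝ)) (nhds (Real.log (1/2))) := by
    have h12 : Tendsto (fun t : ℝ => 1 - t) (nhds (1/2:ℝ)) (nhds (1/2:ℝ)) :=
      Continuous.tendsto' (by fun_prop) _ _ (by norm_num)
    exact logtend.comp h12
  have hp0 : Tendsto p (nhdsWithin (1/2:ℝ) (Set.Iio (1/2))) (nhds 0) := by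
    have hl := logtend.comp hutend
    have hl2 := logtend2.comp hutend
    have := (hl.sub hl2).div_const (Real.log 2)
    rw [hpdef]
    simpa using this
  have hq0 : Tendsto q (nhdsWithin (1/2:ℝ) (Set.Iio (1/2))) (nhds 0) := by
    have hl := logtend.mono_left (nhdsWithin_le_nhds (a := (1/2:ℝ)) (s := Set.Iio (1/2)))
    have hl2 := logtend2.mono_left (nhdsWithin_le_nhds (a := (1/2:ℝ)) (s := Set.Iio (1/2)))
    have := (hl.sub hl2).div_const (Real.log 2)
    rw [hqdef]
    simpa using this
  have hdiv1 : Tendsto (fun t => p t / q t) (nhdsWithin (1/2:ℝ) (Set.Iio (1/2))) (nhds (1/c)) :=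
    HasDerivAt.lhopital_zero_nhdsLT hp_deriv hq_deriv hq'ne hp0 hq0 hdiv2
  -- first L'Hopital
  have hf_deriv : ∀ᶠ t in nhdsWithin (1/2:ℝ) (Set.Iio (1/2)),
      HasDerivAt (fun t => c * (1 - binH (u t))) (p t) t := by
    filter_upwards [hev] with t ht
    obtain ⟨h0, h1, hu0, hu2⟩ := hbounds t ht
    have dH : HasDerivAt binH ((Real.log (1 - u t) - Real.log (u t)) / Real.log 2) (u t) :=
      binH_hasDerivAt hu0.ne' (by linarith)
    have dcomp : HasDerivAt (fun t => binH (u t))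
        ((Real.log (1 - u t) - Real.log (u t)) / Real.log 2 * (1/c)) t :=
      dH.comp t (hder_u t)
    have hd := (dcomp.const_sub 1).const_mul c
    rw [hpdef]
    refine hd.congr_deriv ?_
    field_simp
    ring
  have hg_deriv : ∀ᶠ t in nhdsWithin (1/2:ℝ) (Set.Iio (1/2)),
      HasDerivAt (fun t => 1 - binH t) (q t) t := by
    filter_upwards [hev] with t ht
    obtain ⟨h0, h1, _, _⟩ := hbounds t ht
    have dH : HasDerivAt binH ((Real.log (1 - t) - Real.log t) / Real.log 2) t :=
      binH_hasDerivAt h0.ne' (by linarith)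
    have hd := dH.const_sub 1
    rw [hqdef]
    refine hd.congr_deriv ?_
    ring
  have hqne : ∀ᶠ t in nhdsWithin (1/2:ℝ) (Set.Iio (1/2)), q t ≠ 0 := by
    filter_upwards [hev] with t ht
    obtain ⟨h0, h1, hu0, hu2⟩ := hbounds t ht
    obtain ⟨ht1, ht2⟩ := ht
    have hlt : Real.log t < Real.log (1 - t) := Real.log_lt_log h0 (by linarith)
    have : (Real.log t - Real.log (1 - t)) / Real.log 2 < 0 :=
      div_neg_of_neg_of_pos (by linarith) log2_pos
    rw [hqdef]
    exact this.ne
  have hf0 : Tendsto (fun t => c * (1 - binH (u t))) (nhdsWithin (1/2:ℝ) (Set.Iio (1/2)))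
      (nhds 0) := by
    have hbc : Tendsto (fun t => binH (u t)) (nhdsWithin (1/2:ℝ) (Set.Iio (1/2))) (nhds 1) := by
      have := (binH_continuous.tendsto (1/2)).comp hutend
      rwa [binH_half] at this
    have h1 : Tendsto (fun t => (1:ℝ) - binH (u t)) (nhdsWithin (1/2:ℝ) (Set.Iio (1/2)))
        (nhds (1 - 1)) := tendsto_const_nhds.sub hbc
    have h2 := h1.const_mul c
    norm_num at h2
    exact h2
  have hg0 : Tendsto (fun t => 1 - binH t) (nhdsWithin (1/2:ℝ) (Set.Iio (1/2))) (nhds 0) := by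
    have hb : Tendsto binH (nhdsWithin (1/2:ℝ) (Set.Iio (1/2))) (nhds 1) := by
      have := (binH_continuous.tendsto (1/2)).mono_left
        (nhdsWithin_le_nhds (a := (1/2:ℝ)) (s := Set.Iio (1/2)))
      rwa [binH_half] at this
    have h1 : Tendsto (fun t => (1:ℝ) - binH t) (nhdsWithin (1/2:ℝ) (Set.Iio (1/2)))
        (nhds (1 - 1)) := tendsto_const_nhds.sub hb
    norm_num at h1
    exact h1
  exact HasDerivAt.lhopital_zero_nhdsLT hf_deriv hg_deriv hqne hf0 hg0 hdiv1

lemma binH_lt_one {x : ℝ} (hx : x ≠ 1/2) : binH x < 1 := by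
  rw [binH_eq, div_lt_one log2_pos]
  exact Real.binEntropy_lt_log_two.2 (by rw [show (2⁻¹:ℝ) = 1/2 by norm_num]; exact hx)

lemma binH_strictMonoOn : StrictMonoOn binH (Set.Icc 0 (1/2)) := by
  have e : Set.Icc (0:ℝ) 2⁻¹ = Set.Icc 0 (1/2) := by norm_num
  intro a ha b hb hab
  rw [binH_eq, binH_eq]
  refine div_lt_div_of_pos_right ?_ log2_pos
  rw [← e] at ha hb
  exact Real.binEntropy_strictMonoOn ha hb hab

theorem stmt_14 (γ : ℝ) (hγ0 : 0 ≤ γ) (hγ1 : γ < 1 / 2)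
    (Hinv : ℝ → ℝ)
    (hHinv : ∀ y ∈ Set.Icc (0 : ℝ) 1, Hinv y ∈ Set.Icc (0 : ℝ) (1 / 2) ∧ binH (Hinv y) = y) :
    Tendsto (fun lam : ℝ =>
        ((1 - γ) * (1 - binH ((Hinv (1 - lam) - γ / 2) / (1 - γ)))) / lam)
      (nhdsWithin 0 (Set.Ioi 0)) (nhds (1 / (1 - γ))) := by
  have hev01 : ∀ᶠ lam in nhdsWithin (0:ℝ) (Set.Ioi 0), lam ∈ Set.Ioo (0:ℝ) 1 :=
    Ioo_mem_nhdsGT_of_mem (by norm_num)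
  have hkeyfacts : ∀ lam ∈ Set.Ioo (0:ℝ) 1,
      Hinv (1 - lam) ∈ Set.Icc (0:ℝ) (1/2) ∧ binH (Hinv (1 - lam)) = 1 - lam := by
    intro lam hlam
    exact hHinv _ ⟨by linarith [hlam.2], by linarith [hlam.1]⟩
  have hlt : ∀ lam ∈ Set.Ioo (0:ℝ) 1, Hinv (1 - lam) < 1/2 := by
    intro lam hlam
    obtain ⟨hmem, heq⟩ := hkeyfacts lam hlam
    rcases lt_or_eq_of_le hmem.2 with h | h
    · exact h
    · exfalso; rw [h, binH_half] at heq; linarith [hlam.1]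
  have hφ : Tendsto (fun lam => Hinv (1 - lam)) (nhdsWithin (0:ℝ) (Set.Ioi 0))
      (nhdsWithin (1/2:ℝ) (Set.Iio (1/2))) := by
    rw [tendsto_nhdsWithin_iff]
    constructor
    · rw [tendsto_order]
      constructor
      · intro a ha
        rcases lt_or_ge a 0 with hneg | hpos
        · filter_upwards [hev01] with lam hlam
          exact hneg.trans_le (hkeyfacts lam hlam).1.1
        · have hane : a ≠ 1/2 := ne_of_lt ha
          have hb : binH a < 1 := binH_lt_one hane
          have hδ : (0:ℝ) < min (1 - binH a) 1 := lt_min (by linarith) one_pos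
          filter_upwards [Ioo_mem_nhdsGT_of_mem
            (⟨le_refl (0:ℝ), hδ⟩ : (0:ℝ) ∈ Set.Ico 0 (min (1 - binH a) 1))] with lam hlam
          have hlam1 : lam < 1 := lt_of_lt_of_le hlam.2 (min_le_right _ _)
          obtain ⟨hmem, heq⟩ := hkeyfacts lam ⟨hlam.1, hlam1⟩
          by_contra hcon
          push_neg at hcon
          have hmono : binH (Hinv (1 - lam)) ≤ binH a :=
            binH_strictMonoOn.monotoneOn hmem ⟨hpos, ha.le⟩ hcon
          rw [heq] at hmono
          have h2 : lam < 1 - binH a := lt_of_lt_of_le hlam.2 (min_le_left _ _)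
          linarith
      · intro b hb
        filter_upwards [hev01] with lam hlam
        exact lt_of_le_of_lt (hkeyfacts lam hlam).1.2 hb
    · filter_upwards [hev01] with lam hlam
      exact hlt lam hlam
  have hcomp := (key γ hγ0 hγ1).comp hφ
  refine Tendsto.congr' ?_ hcomp
  filter_upwards [hev01] with lam hlam
  obtain ⟨hmem, heq⟩ := hkeyfacts lam hlam
  simp only [Function.comp]
  rw [heq, show 1 - (1 - lam) = lam by ring]
end
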